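/- arXiv:2404.18794 — 2 statements merged into one kernel-verified Lean document; each statement's English description precedes it below -/
import Mathlib

section
/- Let C ⊆ S³ be a set such that for all distinct α, β ∈ C, ⟨α,β⟩ ∈ {±1, ±1/2, 0}. Suppose moreover C is maximal with this property and spans ℝ⁴. Then for any α, β ∈ C, the reflection β' = β − 2⟨α,β⟩α satisfies ⟨β', γ⟩ ∈ {±1, ±1/2, 0} for all γ ∈ C. -/
theorem reflection_preserves_inner_products
    (C : Set (EuclideanSpace ℝ (Fin 4)))
    (T : Set ℝ) (hT : T = {1, -1, 1/2, -1/2, 0})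
    (hCsub : ∀ x ∈ C, ‖x‖ = 1)
    (hCinner : ∀ x ∈ C, ∀ y ∈ C, x ≠ y → (inner ℝ x y : ℝ) ∈ T)
    (hmax : ∀ S : Set (EuclideanSpace ℝ (Fin 4)),
      (∀ x ∈ S, ‖x‖ = 1) → (∀ x ∈ S, ∀ y ∈ S, x ≠ y → (inner ℝ x y : ℝ) ∈ T) →
      C ⊆ S → S = C)
    (hspan : Submodule.span ℝ C = ⊤)
    (α : EuclideanSpace ℝ (Fin 4)) (hα : α ∈ C)
    (β : EuclideanSpace ℝ (Fin 4)) (hβ : β ∈ C) :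
    ∀ γ ∈ C, (inner ℝ (β - (2 * (inner ℝ α β : ℝ)) • α) γ : ℝ) ∈ T := by
  intro γ hγ
  have key : ∀ x ∈ C, ∀ y ∈ C, (inner ℝ x y : ℝ) ∈ T := by
    intro x hx y hy
    by_cases h : x = y
    · subst h
      have hx1 := hCsub x hx
      have : (inner ℝ x x : ℝ) = 1 := by
        rw [real_inner_self_eq_norm_sq, hx1]; norm_num
      rw [this, hT]; left; rfl
    · exact hCinner x hx y hy h
  have ha : (inner ℝ α β : ℝ) ∈ T := key α hα β hβ
  have hb : (inner ℝ β γ : ℝ) ∈ T := key β hβ γ hγ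
  have hc : (inner ℝ α γ : ℝ) ∈ T := key α hα γ hγ
  have hnα := hCsub α hα
  have hnβ := hCsub β hβ
  have hnγ := hCsub γ hγ
  have hval : (inner ℝ (β - (2 * (inner ℝ α β : ℝ)) • α) γ : ℝ)
      = (inner ℝ β γ : ℝ) - 2 * (inner ℝ α β : ℝ) * (inner ℝ α γ : ℝ) := by
    rw [inner_sub_left, real_inner_smul_left]
  have hba : (inner ℝ β α : ℝ) = (inner ℝ α β : ℝ) := real_inner_comm α β
  have hnorm : ‖β - (2 * (inner ℝ α β : ℝ)) • α‖ = 1 := by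
    have h1 : ‖β - (2 * (inner ℝ α β : ℝ)) • α‖ ^ 2 = 1 := by
      rw [norm_sub_sq_real, real_inner_smul_right, norm_smul, hnα, hnβ, hba,
        mul_one, Real.norm_eq_abs, sq_abs]
      ring
    nlinarith [norm_nonneg (β - (2 * (inner ℝ α β : ℝ)) • α)]
  have hbound : |(inner ℝ β γ : ℝ) - 2 * (inner ℝ α β : ℝ) * (inner ℝ α γ : ℝ)| ≤ 1 := by
    rw [← hval]
    calc |(inner ℝ (β - (2 * (inner ℝ α β : ℝ)) • α) γ : ℝ)|
        ≤ ‖β - (2 * (inner ℝ α β : ℝ)) • α‖ * ‖γ‖ := abs_real_inner_le_norm _ _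
      _ = 1 := by rw [hnorm, hnγ, mul_one]
  rw [hval]
  rw [hT] at ha hb hc ⊢
  simp only [Set.mem_insert_iff, Set.mem_singleton_iff] at ha hb hc ⊢
  rw [abs_le] at hbound
  rcases ha with h1|h1|h1|h1|h1 <;> rcases hb with h2|h2|h2|h2|h2 <;>
    rcases hc with h3|h3|h3|h3|h3 <;> rw [h1, h2, h3] at hbound ⊢ <;>
    revert hbound <;> norm_num
end

section
/- If there exists a function on pairs of points of S³ showing that every 24-point subset C ⊆ S³ with pairwise inner products at most 1/2 has all pairwise inner products in {−1, −1/2, 0, 1/2}, then every 24-point subset of S³ has two distinct points with inner product at least 1/2; i.e., min over 24-point codes of the maximum pairwise inner product equals 1/2. -/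
private lemma aux_lb (a c n : ℝ) (ha : a ≤ 0) (hc : c ≤ 1) (hn : 0 < n) :
    a < c * a + (1/100 : ℝ) * n := by
  nlinarith [mul_nonneg (neg_nonneg.mpr ha) (sub_nonneg.mpr hc)]

private lemma aux_ub (a c n : ℝ) (ha : -1/2 ≤ a) (hc1 : c ≤ 1)
    (hc2 : 1 - (1/100 : ℝ) ^ 2 ≤ c) (hn : n ≤ 1) :
    c * a + (1/100 : ℝ) * n < a + 1/50 := by
  nlinarith [mul_nonneg (sub_nonneg.mpr hc1) (by linarith : (0:ℝ) ≤ a + 1/2)]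

private lemma aux_bnd (p q t n c : ℝ) (hp : p ≤ 0) (hc : 0 ≤ c)
    (h1 : t * q ≤ t * n) (h2 : t * n = 1/100) : c * p + t * q ≤ 1/2 := by
  nlinarith [mul_nonneg hc (neg_nonneg.mpr hp)]


theorem optimal_code_from_rigidity
    (H : ∀ C : Set (EuclideanSpace ℝ (Fin 4)),
      (∀ x ∈ C, ‖x‖ = 1) → C.ncard = 24 →
      (∀ x ∈ C, ∀ y ∈ C, x ≠ y → (inner ℝ x y : ℝ) ≤ 1/2) →
      (∀ x ∈ C, ∀ y ∈ C, x ≠ y →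
        (inner ℝ x y : ℝ) ∈ ({-1, -1/2, 0, 1/2} : Set ℝ))) :
    ∀ C : Set (EuclideanSpace ℝ (Fin 4)),
      (∀ x ∈ C, ‖x‖ = 1) → C.ncard = 24 →
      ∃ x ∈ C, ∃ y ∈ C, x ≠ y ∧ (1/2 : ℝ) ≤ (inner ℝ x y : ℝ) := by
  intro C hunit hcard
  by_contra hcon
  push_neg at hcon
  -- hcon : ∀ x ∈ C, ∀ y ∈ C, x ≠ y → inner x y < 1/2
  have hle : ∀ x ∈ C, ∀ y ∈ C, x ≠ y → (inner ℝ x y : ℝ) ≤ 1/2 :=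
    fun x hx y hy h => (hcon x hx y hy h).le
  have hmem := H C hunit hcard hle
  have hset : ∀ x ∈ C, ∀ y ∈ C, x ≠ y →
      (inner ℝ x y : ℝ) = -1 ∨ (inner ℝ x y : ℝ) = -1/2 ∨ (inner ℝ x y : ℝ) = 0 := by
    intro x hx y hy h
    have h1 := hmem x hx y hy h
    have h2 := hcon x hx y hy h
    simp only [Set.mem_insert_iff, Set.mem_singleton_iff] at h1
    rcases h1 with h' | h' | h' | h'
    · exact Or.inl h'
    · exact Or.inr (Or.inl h')
    · exact Or.inr (Or.inr h')
    · exact absurd h' (by linarith)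
  have hfin : C.Finite := Set.finite_of_ncard_ne_zero (by rw [hcard]; norm_num)
  obtain ⟨x, hx⟩ : C.Nonempty := Set.nonempty_of_ncard_ne_zero (by rw [hcard]; norm_num)
  -- self inner products
  have hself : ∀ w ∈ C, (inner ℝ w w : ℝ) = 1 := by
    intro w hw
    rw [real_inner_self_eq_norm_sq, hunit w hw]; norm_num
  -- find z ∈ C with z ≠ x and ⟨x,z⟩ ≠ -1
  obtain ⟨z, hzC, hzx, hza⟩ : ∃ z ∈ C, z ≠ x ∧ (inner ℝ x z : ℝ) ≠ -1 := by
    by_contra h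
    push_neg at h
    have hsub : C ⊆ {x, -x} := by
      intro w hw
      by_cases hwx : w = x
      · exact Or.inl hwx
      · right
        have hw1 : (inner ℝ x w : ℝ) = -1 := h w hw hwx
        have hsq : ‖x + w‖ ^ 2 = 0 := by
          rw [norm_add_sq_real, hunit x hx, hunit w hw, hw1]; ring
        have h0 : x + w = 0 := by
          have := pow_eq_zero_iff (two_ne_zero) |>.mp hsq
          exact norm_eq_zero.mp this
        simp only [Set.mem_singleton_iff]
        exact eq_neg_of_add_eq_zero_right h0
    have hle2 : C.ncard ≤ 2 := by
      refine le_trans (Set.ncard_le_ncard hsub (Set.toFinite _)) ?_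
      refine le_trans (Set.ncard_insert_le _ _) ?_
      simp [Set.ncard_singleton]
    rw [hcard] at hle2; norm_num at hle2
  have hxz : x ≠ z := Ne.symm hzx
  set a : ℝ := (inner ℝ x z : ℝ) with ha_def
  have ha : a = -1/2 ∨ a = 0 := by
    rcases hset x hx z hzC hxz with h' | h' | h'
    · exact absurd h' hza
    · exact Or.inl h'
    · exact Or.inr h'
  have ha_le : a ≤ 0 := by rcases ha with h | h <;> rw [h] <;> norm_num
  have ha_ge : -1/2 ≤ a := by rcases ha with h | h <;> rw [h] <;> norm_num
  have hcomm : (inner ℝ z x : ℝ) = a := (real_inner_comm z x).symm.trans ha_def.symm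
  -- the perturbation direction
  set u : EuclideanSpace ℝ (Fin 4) := z - a • x with hu_def
  have hxu : (inner ℝ x u : ℝ) = 0 := by
    simp only [hu_def, inner_sub_right, real_inner_smul_right, hself x hx, ← ha_def]
    ring
  have hux : (inner ℝ u x : ℝ) = 0 := (real_inner_comm u x).symm.trans hxu
  have huu : (inner ℝ u u : ℝ) = 1 - a ^ 2 := by
    simp only [hu_def, inner_sub_left, inner_sub_right, real_inner_smul_left,
      real_inner_smul_right, hself x hx, hself z hzC, hcomm, ← ha_def]
    ring
  have huz : (inner ℝ u z : ℝ) = 1 - a ^ 2 := by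
    simp only [hu_def, inner_sub_left, real_inner_smul_left, hself z hzC, hcomm, ← ha_def]
    ring
  have hnu2 : ‖u‖ ^ 2 = 1 - a ^ 2 := by rw [← real_inner_self_eq_norm_sq]; exact huu
  have hnupos : 0 < ‖u‖ := by
    have h1 : (0 : ℝ) < ‖u‖ ^ 2 := by rw [hnu2]; nlinarith
    nlinarith [norm_nonneg u]
  have hnule : ‖u‖ ≤ 1 := by nlinarith [norm_nonneg u]
  have hnu_ne : ‖u‖ ≠ 0 := ne_of_gt hnupos
  -- the constants
  set c : ℝ := Real.sqrt (1 - (1/100 : ℝ) ^ 2) with hc_def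
  have hc2 : c ^ 2 = 1 - (1/100 : ℝ) ^ 2 := Real.sq_sqrt (by norm_num)
  have hcpos : 0 < c := Real.sqrt_pos.mpr (by norm_num)
  have hcle : c ≤ 1 := by nlinarith
  have hclb : 1 - (1/100 : ℝ) ^ 2 ≤ c := by nlinarith
  set x' : EuclideanSpace ℝ (Fin 4) := c • x + ((1/100 : ℝ) / ‖u‖) • u with hx'_def
  have hx'w : ∀ w, (inner ℝ x' w : ℝ)
      = c * (inner ℝ x w : ℝ) + ((1/100 : ℝ) / ‖u‖) * (inner ℝ u w : ℝ) := by
    intro w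
    simp only [hx'_def, inner_add_left, real_inner_smul_left]
  have hx'norm : ‖x'‖ = 1 := by
    have ht2 : ((1/100 : ℝ) / ‖u‖) * (((1/100 : ℝ) / ‖u‖) * ‖u‖ ^ 2) = (1/100 : ℝ) ^ 2 := by
      field_simp
    have hsq : ‖x'‖ ^ 2 = 1 := by
      rw [← real_inner_self_eq_norm_sq]
      simp only [hx'_def, inner_add_left, inner_add_right, real_inner_smul_left,
        real_inner_smul_right, hself x hx, hxu, hux, huu, ← hnu2]
      linear_combination hc2 + ht2
    calc ‖x'‖ = Real.sqrt (‖x'‖ ^ 2) := (Real.sqrt_sq (norm_nonneg _)).symm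
      _ = 1 := by rw [hsq, Real.sqrt_one]
  -- value of the perturbed inner product
  have hfval : (inner ℝ x' z : ℝ) = c * a + (1/100 : ℝ) * ‖u‖ := by
    rw [hx'w z, huz, ← hnu2, ← ha_def]
    field_simp
  have hf_lb : a < (inner ℝ x' z : ℝ) := by
    rw [hfval]
    exact aux_lb a c ‖u‖ ha_le hcle hnupos
  have hf_ub : (inner ℝ x' z : ℝ) < a + 1/50 := by
    rw [hfval]
    exact aux_ub a c ‖u‖ ha_ge hcle hclb hnule
  have hfnot : (inner ℝ x' z : ℝ) ≠ -1 ∧ (inner ℝ x' z : ℝ) ≠ -1/2 ∧ (inner ℝ x' z : ℝ) ≠ 0 ∧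
      (inner ℝ x' z : ℝ) ≠ 1/2 ∧ (inner ℝ x' z : ℝ) ≠ 1 := by
    rcases ha with h | h <;> rw [h] at hf_lb hf_ub <;>
      exact ⟨by intro he; rw [he] at hf_lb; linarith,
             by intro he; rw [he] at hf_lb hf_ub; linarith,
             by intro he; rw [he] at hf_lb hf_ub; linarith,
             by intro he; rw [he] at hf_ub; linarith,
             by intro he; rw [he] at hf_ub; linarith⟩
  -- bound for inner products of x' with other points
  have hbnd : ∀ w ∈ C, w ≠ x → (inner ℝ x' w : ℝ) ≤ 1/2 := by
    intro w hw hwx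
    rw [hx'w w]
    have hxw : (inner ℝ x w : ℝ) ≤ 0 := by
      rcases hset x hx w hw (Ne.symm hwx) with h' | h' | h' <;> rw [h'] <;> norm_num
    have hCS : (inner ℝ u w : ℝ) ≤ ‖u‖ := by
      have := real_inner_le_norm u w
      rw [hunit w hw] at this; linarith
    have ht : (0 : ℝ) < (1/100 : ℝ) / ‖u‖ := by positivity
    have h1 : ((1/100 : ℝ) / ‖u‖) * (inner ℝ u w : ℝ) ≤ ((1/100 : ℝ) / ‖u‖) * ‖u‖ :=
      mul_le_mul_of_nonneg_left hCS ht.le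
    have h2 : ((1/100 : ℝ) / ‖u‖) * ‖u‖ = 1/100 := div_mul_cancel₀ _ hnu_ne
    exact aux_bnd _ _ _ _ _ hxw hcpos.le h1 h2
  -- x' is not in C \ {x}
  have hx'notin : x' ∉ C \ {x} := by
    intro hmem'
    have hx'C : x' ∈ C := hmem'.1
    by_cases hx'z : x' = z
    · exact hfnot.2.2.2.2 (by rw [hx'z]; exact hself z hzC)
    · rcases hset x' hx'C z hzC hx'z with h' | h' | h'
      · exact hfnot.1 h'
      · exact hfnot.2.1 h'
      · exact hfnot.2.2.1 h'
  have hx'z : x' ≠ z := by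
    intro he
    exact hfnot.2.2.2.2 (by rw [he]; exact hself z hzC)
  -- the perturbed code
  set C' : Set (EuclideanSpace ℝ (Fin 4)) := insert x' (C \ {x}) with hC'_def
  have hfin' : (C \ {x}).Finite := hfin.diff
  have hcard' : C'.ncard = 24 := by
    rw [hC'_def, Set.ncard_insert_of_notMem hx'notin hfin',
      Set.ncard_diff_singleton_of_mem hx, hcard]
  have hunit' : ∀ w ∈ C', ‖w‖ = 1 := by
    intro w hw
    rcases Set.mem_insert_iff.mp hw with rfl | hw'
    · exact hx'norm
    · exact hunit w hw'.1
  have hle' : ∀ p ∈ C', ∀ q ∈ C', p ≠ q → (inner ℝ p q : ℝ) ≤ 1/2 := by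
    intro p hp q hq hpq
    rcases Set.mem_insert_iff.mp hp with rfl | hp' <;>
      rcases Set.mem_insert_iff.mp hq with rfl | hq'
    · exact absurd rfl hpq
    · exact hbnd q hq'.1 (by simpa using hq'.2)
    · rw [real_inner_comm]
      exact hbnd p hp'.1 (by simpa using hp'.2)
    · exact hle p hp'.1 q hq'.1 hpq
  have hz' : z ∈ C' := Set.mem_insert_iff.mpr (Or.inr ⟨hzC, by simpa using hzx⟩)
  have hfinal := H C' hunit' hcard' hle' x' (Set.mem_insert _ _) z hz' hx'z
  simp only [Set.mem_insert_iff, Set.mem_singleton_iff] at hfinal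
  rcases hfinal with h' | h' | h' | h'
  · exact hfnot.1 h'
  · exact hfnot.2.1 h'
  · exact hfnot.2.2.1 h'
  · exact hfnot.2.2.2.1 h'
end
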